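/- Suppose p ∈ ℂ[z,w] is square free and inner toral. Then the partial derivative ∂p/∂w has only finitely many zeros in 𝔙(p); that is, the set {(z,w) ∈ 𝔙(p) : (∂p/∂w)(z,w) = 0} is finite. -/

import Mathlib

noncomputable section

open MvPolynomial

/-- Polynomials in two variables `z, w` over `ℂ`. -/
abbrev CPoly2 : Type := MvPolynomial (Fin 2) ℂ

/-- Evaluation of a two-variable polynomial at `(z, w)`. -/
def pevalAt (p : CPoly2) (z w : ℂ) : ℂ := eval ![z, w] p

/-- The zero set `Z(p) ⊆ ℂ²`. -/
def zeroSet (p : CPoly2) : Set (ℂ × ℂ) := {x | pevalAt p x.1 x.2 = 0}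

/-- The open bidisk `𝔻²`. -/
def biDisk : Set (ℂ × ℂ) := {x | ‖x.1‖ < 1 ∧ ‖x.2‖ < 1}

/-- `𝔙(p) = Z(p) ∩ 𝔻²`. -/
def distVar (p : CPoly2) : Set (ℂ × ℂ) := zeroSet p ∩ biDisk

/-- A polynomial is inner toral if its zero set lies in `𝔻² ∪ 𝕋² ∪ 𝔼²`. -/
def InnerToral (p : CPoly2) : Prop :=
  ∀ z w : ℂ, pevalAt p z w = 0 →
    (‖z‖ < 1 ∧ ‖w‖ < 1) ∨
    (‖z‖ = 1 ∧ ‖w‖ = 1) ∨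
    (1 < ‖z‖ ∧ 1 < ‖w‖)

/-- `p` and `q` are relatively prime: no non-constant polynomial divides both. -/
def RelPrime (p q : CPoly2) : Prop :=
  ∀ d : CPoly2, d ∣ p → d ∣ q → d.totalDegree = 0

/-- `p` is square free: the square of a non-constant polynomial never divides `p`. -/
def SqFree (p : CPoly2) : Prop :=
  ∀ d : CPoly2, 0 < d.totalDegree → ¬ d * d ∣ p

/-- `(λ, μ)` is a regular point for `p`: `p(λ,μ) = 0` and `∇p(λ,μ) ≠ 0`. -/
def IsRegularPoint (p : CPoly2) (x : ℂ × ℂ) : Prop :=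
  pevalAt p x.1 x.2 = 0 ∧
    (eval ![x.1, x.2] (pderiv (0 : Fin 2) p) ≠ 0 ∨
     eval ![x.1, x.2] (pderiv (1 : Fin 2) p) ≠ 0)

/-- The one-variable polynomial `p_λ(w) = p(λ, w)`. -/
def pSlice (p : CPoly2) (lam : ℂ) : Polynomial ℂ :=
  MvPolynomial.aeval ![Polynomial.C lam, Polynomial.X] p

section Ops

variable {H : Type*} [NormedAddCommGroup H] [NormedSpace ℂ H]

/-- For `q(z,w) = Σ c_{ij} z^i w^j`, `polyOp q S T = q(S,T) = Σ c_{ij} S^i T^j`. -/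
def polyOp (q : CPoly2) (S T : H →L[ℂ] H) : H →L[ℂ] H :=
  ∑ m ∈ q.support, q.coeff m • (S ^ (m 0) * T ^ (m 1))

/-- A pure isometry: an isometry with `⋂ₙ Vⁿ(H) = {0}`. -/
def IsPureIsometry (S : H →L[ℂ] H) : Prop :=
  (∀ x : H, ‖S x‖ = ‖x‖) ∧ (⋂ n : ℕ, Set.range (⇑(S ^ (n + 1)))) = ({0} : Set H)

/-- A pure `p`-isopair: a commuting pair of pure isometries annihilated by `p`. -/
def IsPureIsopair (p : CPoly2) (S T : H →L[ℂ] H) : Prop :=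
  Commute S T ∧ IsPureIsometry S ∧ IsPureIsometry T ∧ polyOp p S T = 0

/-- The set `{Σ_j q_j(S,T) f_j : q_j ∈ ℂ[z,w]}`. -/
def cyclicSet (S T : H →L[ℂ] H) {k : ℕ} (f : Fin k → H) : Set H :=
  {x | ∃ q : Fin k → CPoly2, x = ∑ j, polyOp (q j) S T (f j)}

/-- `(S,T)` is `k`-cyclic: some `f_1, …, f_k` have `closure {Σ q_j(S,T) f_j} = H`. -/
def IsKCyclic (S T : H →L[ℂ] H) (k : ℕ) : Prop :=
  ∃ f : Fin k → H, closure (cyclicSet S T f) = Set.univ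

/-- `(S,T)` is at most nearly `k`-cyclic: some `f_1, …, f_k` have
`closure {Σ q_j(S,T) f_j}` of finite codimension in `H`. -/
def AtMostNearlyKCyclic (S T : H →L[ℂ] H) (k : ℕ) : Prop :=
  ∃ f : Fin k → H,
    FiniteDimensional ℂ (H ⧸ (Submodule.span ℂ (cyclicSet S T f)).topologicalClosure)

/-- `(S,T)` is nearly `k`-cyclic: at most nearly `k`-cyclic but not `k'` for `k' < k`. -/
def NearlyKCyclic (S T : H →L[ℂ] H) (k : ℕ) : Prop :=
  AtMostNearlyKCyclic S T k ∧ ∀ k' < k, ¬ AtMostNearlyKCyclic S T k'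

/-- Restriction of a continuous linear operator to an invariant subspace. -/
def clmRestrict (S : H →L[ℂ] H) (E : Submodule ℂ H) (h : ∀ x ∈ E, S x ∈ E) : E →L[ℂ] E :=
  { toLinearMap := (S : H →ₗ[ℂ] H).restrict h
    cont := by exact Continuous.subtype_mk (S.continuous.comp continuous_subtype_val) _ }

end Ops

/-- Unitary equivalence of pairs: a unitary `U` with `U S₁ = S₂ U` and `U T₁ = T₂ U`. -/
def UnitarilyEquivPairs {H1 H2 : Type*} [NormedAddCommGroup H1] [NormedSpace ℂ H1]
    [NormedAddCommGroup H2] [NormedSpace ℂ H2]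
    (S1 T1 : H1 →L[ℂ] H1) (S2 T2 : H2 →L[ℂ] H2) : Prop :=
  ∃ U : H1 ≃ₗᵢ[ℂ] H2, (∀ x, U (S1 x) = S2 (U x)) ∧ (∀ x, U (T1 x) = T2 (U x))

section Hilbert

variable {H : Type*} [NormedAddCommGroup H] [InnerProductSpace ℂ H] [CompleteSpace H]

/-- The multiplicity of an isometry: `dim ker V*`. -/
def multiplicity' (S : H →L[ℂ] H) : Cardinal :=
  Module.rank ℂ (LinearMap.ker ((ContinuousLinearMap.adjoint S : H →L[ℂ] H) : H →ₗ[ℂ] H))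

/-- Finite bimultiplicity: both `mult S` and `mult T` are finite. -/
def FiniteBimult (S T : H →L[ℂ] H) : Prop :=
  multiplicity' S < Cardinal.aleph0 ∧ multiplicity' T < Cardinal.aleph0

/-- `dim (ker (S - λ)* ∩ ker (T - μ)*)`. -/
def jointKerDim (S T : H →L[ℂ] H) (lam mu : ℂ) : Cardinal :=
  Module.rank ℂ
    ↥(LinearMap.ker ((ContinuousLinearMap.adjoint (S - lam • 1) : H →L[ℂ] H) : H →ₗ[ℂ] H) ⊓
      LinearMap.ker ((ContinuousLinearMap.adjoint (T - mu • 1) : H →L[ℂ] H) : H →ₗ[ℂ] H))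

/-- `(S,T)` has rank `α`: for each `j` and every regular point `(λ,μ)` of `p` in `𝔙(p_j)`,
`dim (ker (S-λ)* ∩ ker (T-μ)*) = α_j`. -/
def HasRank (p : CPoly2) {s : ℕ} (ps : Fin s → CPoly2) (S T : H →L[ℂ] H)
    (α : Fin s → ℕ) : Prop :=
  ∀ j : Fin s, ∀ x : ℂ × ℂ, x ∈ distVar (ps j) → IsRegularPoint p x →
    jointKerDim S T x.1 x.2 = (α j : Cardinal)

/-- Rank for an isopair attached to a single irreducible polynomial. -/
def HasRankIrred (p : CPoly2) (S T : H →L[ℂ] H) (a : ℕ) : Prop :=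
  ∀ x : ℂ × ℂ, x ∈ distVar p → IsRegularPoint p x →
    jointKerDim S T x.1 x.2 = (a : Cardinal)

end Hilbert

/-- A pair of operators acting on some complex Hilbert space. -/
structure HilbertPair where
  space : Type*
  [nacg : NormedAddCommGroup space]
  [ips : InnerProductSpace ℂ space]
  [cs : CompleteSpace space]
  S : space →L[ℂ] space
  T : space →L[ℂ] space

attribute [instance] HilbertPair.nacg HilbertPair.ips HilbertPair.cs

namespace S5Aux

open Polynomial in
/-- The algebra map sending `X 0 ↦ C X` (the variable `z` as a constant) and `X 1 ↦ X`. -/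
def ΦA : CPoly2 →ₐ[ℂ] Polynomial (Polynomial ℂ) :=
  aeval ![Polynomial.C Polynomial.X, Polynomial.X]

def ΨE : CPoly2 ≃ₐ[ℂ] Polynomial (Polynomial ℂ) :=
  (renameEquiv ℂ (Equiv.swap 0 1)).trans ((finSuccEquiv ℂ 1).trans
    (Polynomial.mapAlgEquiv ((finSuccEquiv ℂ 0).trans
      (Polynomial.mapAlgEquiv (isEmptyAlgEquiv ℂ (Fin 0))))))

lemma ΨE_eq (q : CPoly2) : ΨE q = ΦA q := by
  have h : (ΨE : CPoly2 →ₐ[ℂ] Polynomial (Polynomial ℂ)) = ΦA := by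
    apply MvPolynomial.algHom_ext
    intro i
    fin_cases i
    · show Polynomial.map _ ((finSuccEquiv ℂ 1) (rename _ (X 0))) = _
      rw [rename_X]
      rw [show (Equiv.swap (0 : Fin 2) 1) 0 = Fin.succ 0 from rfl, finSuccEquiv_X_succ]
      simp [ΦA, finSuccEquiv_X_zero]
    · show Polynomial.map _ ((finSuccEquiv ℂ 1) (rename _ (X 1))) = _
      rw [rename_X]
      rw [show (Equiv.swap (0 : Fin 2) 1) 1 = 0 from rfl, finSuccEquiv_X_zero]
      simp [ΦA]
  exact AlgHom.congr_fun h q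

def evA (z0 w0 : ℂ) : Polynomial (Polynomial ℂ) →ₐ[ℂ] ℂ where
  toRingHom := Polynomial.eval₂RingHom (Polynomial.evalRingHom z0) w0
  commutes' := fun c => by
    simp [Polynomial.algebraMap_apply]

lemma ΦA_eval (z0 w0 : ℂ) (q : CPoly2) :
    Polynomial.eval₂ (Polynomial.evalRingHom z0) w0 (ΦA q) = eval ![z0, w0] q := by
  have h : (evA z0 w0).comp ΦA = aeval ![z0, w0] := by
    apply MvPolynomial.algHom_ext
    intro i
    fin_cases i <;> simp [evA, ΦA]
  have := AlgHom.congr_fun h q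
  exact this

lemma ΦA_derivative (q : CPoly2) :
    Polynomial.derivative (ΦA q) = ΦA (pderiv 1 q) := by
  induction q using MvPolynomial.induction_on with
  | C a => simp [ΦA]
  | add p q hp hq => simp [map_add, hp, hq]
  | mul_X p j hp =>
    rw [map_mul, Polynomial.derivative_mul, hp, pderiv_mul, map_add, map_mul, map_mul]
    fin_cases j <;> simp [ΦA]

lemma pSlice_eval (lam w0 : ℂ) (q : CPoly2) :
    (pSlice q lam).eval w0 = eval ![lam, w0] q := by
  have h : (Polynomial.aeval w0 : Polynomial ℂ →ₐ[ℂ] ℂ).comp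
      (aeval ![Polynomial.C lam, Polynomial.X]) = aeval ![lam, w0] := by
    apply MvPolynomial.algHom_ext
    intro i
    fin_cases i <;> simp
  have := AlgHom.congr_fun h q
  simp only [AlgHom.coe_comp, Function.comp_apply, Polynomial.coe_aeval_eq_eval] at this
  exact this

lemma eq_C_of_td {d : CPoly2} (h : d.totalDegree = 0) : d = C (d.coeff 0) := by
  ext m
  rcases eq_or_ne m 0 with rfl | hm
  · simp
  · have hns : m ∉ d.support := by
      intro hs
      exact hm (Finsupp.ext fun x => (totalDegree_eq_zero_iff _ d).mp h m hs x)
    rw [notMem_support_iff.mp hns, coeff_C, if_neg (fun h' => hm h'.symm)]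

lemma sqfree_map_fraction {Q : Polynomial (Polynomial ℂ)} (hQ : Q ≠ 0) (h : Squarefree Q) :
    Squarefree (Q.map (algebraMap (Polynomial ℂ) (FractionRing (Polynomial ℂ)))) := by
  set R := Polynomial ℂ
  set K := FractionRing R
  intro d hd
  by_contra hdu
  have hQK : Q.map (algebraMap R K) ≠ 0 := by
    simpa [Polynomial.map_eq_zero_iff (IsFractionRing.injective R K)] using hQ
  have hd0 : d ≠ 0 := by
    rintro rfl
    rw [mul_zero] at hd
    exact hQK (zero_dvd_iff.mp hd)
  obtain ⟨c, hc⟩ := IsLocalization.integerNormalization_map_to_map (nonZeroDivisors R) d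
  set N := IsLocalization.integerNormalization (nonZeroDivisors R) d with hN
  have hcK : algebraMap R K (c : R) ≠ 0 := by
    simpa using nonZeroDivisors.coe_ne_zero c
  have hNmap : N.map (algebraMap R K) = Polynomial.C (algebraMap R K (c : R)) * d := by
    rw [hc, Algebra.smul_def, Polynomial.algebraMap_apply]
  have hN0 : N ≠ 0 := by
    intro h0
    rw [h0, Polynomial.map_zero] at hNmap
    exact hd0 (by
      have := hNmap.symm
      rcases mul_eq_zero.mp this with h1 | h1
      · exact absurd (Polynomial.C_eq_zero.mp h1) hcK
      · exact h1)
  set D := N.primPart with hD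
  have hDprim : D.IsPrimitive := N.isPrimitive_primPart
  have hcont : algebraMap R K N.content ≠ 0 := by
    simpa using (Polynomial.content_eq_zero_iff.not.mpr hN0)
  have hDassoc : Associated (D.map (algebraMap R K)) d := by
    have hN' : Polynomial.C (algebraMap R K N.content) * D.map (algebraMap R K)
        = Polynomial.C (algebraMap R K (c : R)) * d := by
      rw [← hNmap]
      conv_rhs => rw [N.eq_C_content_mul_primPart]
      rw [Polynomial.map_mul, Polynomial.map_C]
    have u1 : IsUnit (Polynomial.C (algebraMap R K N.content)) :=
      Polynomial.isUnit_C.mpr (isUnit_iff_ne_zero.mpr hcont)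
    have u2 : IsUnit (Polynomial.C (algebraMap R K (c : R))) :=
      Polynomial.isUnit_C.mpr (isUnit_iff_ne_zero.mpr hcK)
    have a1 : Associated (D.map (algebraMap R K))
        (Polynomial.C (algebraMap R K (c : R)) * d) := by
      rw [← hN']
      exact (associated_unit_mul_left _ _ u1).symm
    exact a1.trans (associated_unit_mul_left _ _ u2)
  have hQmap : Associated (Q.primPart.map (algebraMap R K)) (Q.map (algebraMap R K)) := by
    have u1 : IsUnit (Polynomial.C (algebraMap R K Q.content)) :=
      Polynomial.isUnit_C.mpr (isUnit_iff_ne_zero.mpr (by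
        simpa using (Polynomial.content_eq_zero_iff.not.mpr hQ)))
    have a1 : Associated (Q.primPart.map (algebraMap R K))
        (Polynomial.C (algebraMap R K Q.content) * Q.primPart.map (algebraMap R K)) :=
      (associated_unit_mul_left _ _ u1).symm
    have a2 : Polynomial.C (algebraMap R K Q.content) * Q.primPart.map (algebraMap R K)
        = Q.map (algebraMap R K) := by
      conv_rhs => rw [Q.eq_C_content_mul_primPart]
      rw [Polynomial.map_mul, Polynomial.map_C]
    exact a1.trans (a2 ▸ Associated.refl _)
  have hdvd : (D * D).map (algebraMap R K) ∣ Q.primPart.map (algebraMap R K) := by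
    rw [Polynomial.map_mul]
    exact ((hDassoc.mul_mul hDassoc).dvd_iff_dvd_left).mpr (hd.trans hQmap.symm.dvd)
  have hdvd2 : D * D ∣ Q.primPart :=
    (hDprim.mul hDprim).dvd_of_fraction_map_dvd_fraction_map hdvd
  have hDu : IsUnit D := h D (hdvd2.trans Q.primPart_dvd)
  exact hdu (hDassoc.isUnit (hDu.map (Polynomial.mapRingHom (algebraMap R K))))

lemma clear_denoms {Q Q' : Polynomial (Polynomial ℂ)}
    (h : IsCoprime (Q.map (algebraMap (Polynomial ℂ) (FractionRing (Polynomial ℂ))))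
      (Q'.map (algebraMap (Polynomial ℂ) (FractionRing (Polynomial ℂ))))) :
    ∃ (A B : Polynomial (Polynomial ℂ)) (r : Polynomial ℂ), r ≠ 0 ∧
      A * Q + B * Q' = Polynomial.C r := by
  set R := Polynomial ℂ
  set K := FractionRing R
  obtain ⟨a, b, hab⟩ := h
  obtain ⟨ca, ha⟩ := IsLocalization.integerNormalization_map_to_map (nonZeroDivisors R) a
  obtain ⟨cb, hb⟩ := IsLocalization.integerNormalization_map_to_map (nonZeroDivisors R) b
  set A := IsLocalization.integerNormalization (nonZeroDivisors R) a
  set B := IsLocalization.integerNormalization (nonZeroDivisors R) b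
  have ha' : A.map (algebraMap R K) = Polynomial.C (algebraMap R K (ca : R)) * a := by
    rw [ha, Algebra.smul_def, Polynomial.algebraMap_apply]
  have hb' : B.map (algebraMap R K) = Polynomial.C (algebraMap R K (cb : R)) * b := by
    rw [hb, Algebra.smul_def, Polynomial.algebraMap_apply]
  refine ⟨Polynomial.C (cb : R) * A, Polynomial.C (ca : R) * B, (ca : R) * (cb : R),
    mul_ne_zero (nonZeroDivisors.coe_ne_zero ca) (nonZeroDivisors.coe_ne_zero cb), ?_⟩
  apply Polynomial.map_injective (algebraMap R K) (IsFractionRing.injective R K)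
  rw [Polynomial.map_add, Polynomial.map_mul, Polynomial.map_mul, Polynomial.map_mul,
    Polynomial.map_mul, ha', hb', Polynomial.map_C, Polynomial.map_C, Polynomial.map_C,
    map_mul, Polynomial.C_mul]
  linear_combination (Polynomial.C (algebraMap R K (ca : R)) *
    Polynomial.C (algebraMap R K (cb : R))) * hab

end S5Aux

/-- `∂p/∂w` has only finitely many zeros in `𝔙(p)`. -/
theorem statement5 (p : CPoly2) (hsf : SqFree p) (hit : InnerToral p) :
    {x ∈ distVar p | eval ![x.1, x.2] (pderiv (1 : Fin 2) p) = 0}.Finite := by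
  classical
  have hslice : ∀ z0 : ℂ, ‖z0‖ < 1 → pSlice p z0 ≠ 0 := by
    intro z0 hz0 h0
    have h2 : pevalAt p z0 2 = 0 := by
      rw [pevalAt, ← S5Aux.pSlice_eval, h0, Polynomial.eval_zero]
    rcases hit z0 2 h2 with ⟨_, h⟩ | ⟨h, _⟩ | ⟨h, _⟩
    · rw [Complex.norm_two] at h; linarith
    · exact absurd h hz0.ne
    · linarith
  have hp0 : p ≠ 0 := by
    intro h
    exact hslice 0 (by simp) (by simp [pSlice, h])
  have hsq : Squarefree p := by
    intro d hd
    by_contra hdu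
    have hd0 : d ≠ 0 := by
      rintro rfl
      rw [mul_zero] at hd
      exact hp0 (zero_dvd_iff.mp hd)
    have htd : d.totalDegree ≠ 0 := by
      intro h0
      have hC := S5Aux.eq_C_of_td h0
      have hc0 : d.coeff 0 ≠ 0 := by
        intro h1
        rw [h1, map_zero] at hC
        exact hd0 hC
      exact hdu (hC ▸ (isUnit_iff_ne_zero.mpr hc0).map (C : ℂ →+* CPoly2))
    exact hsf d (Nat.pos_of_ne_zero htd) hd
  have hQ0 : S5Aux.ΦA p ≠ 0 := by
    intro h
    apply hp0
    apply S5Aux.ΨE.injective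
    rw [S5Aux.ΨE_eq, h, map_zero]
  have hQsq : Squarefree (S5Aux.ΦA p) := by
    intro d hd
    have hdvd : S5Aux.ΨE.symm d * S5Aux.ΨE.symm d ∣ p := by
      have h2 := map_dvd S5Aux.ΨE.symm hd
      rw [map_mul] at h2
      rwa [show S5Aux.ΨE.symm (S5Aux.ΦA p) = p from by
        rw [← S5Aux.ΨE_eq]; exact S5Aux.ΨE.symm_apply_apply p] at h2
    have hu := hsq _ hdvd
    simpa [S5Aux.ΨE.apply_symm_apply] using hu.map S5Aux.ΨE
  have hQKsq := S5Aux.sqfree_map_fraction hQ0 hQsq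
  have hsep : ((S5Aux.ΦA p).map
      (algebraMap (Polynomial ℂ) (FractionRing (Polynomial ℂ)))).Separable :=
    (PerfectField.separable_iff_squarefree).mpr hQKsq
  have hcop : IsCoprime
      ((S5Aux.ΦA p).map (algebraMap (Polynomial ℂ) (FractionRing (Polynomial ℂ))))
      ((Polynomial.derivative (S5Aux.ΦA p)).map
        (algebraMap (Polynomial ℂ) (FractionRing (Polynomial ℂ)))) := by
    rwa [Polynomial.Separable, Polynomial.derivative_map] at hsep
  obtain ⟨A, B, r, hr0, hABr⟩ := S5Aux.clear_denoms hcop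
  rw [S5Aux.ΦA_derivative] at hABr
  have hfin : Set.Finite (⋃ z0 ∈ (r.roots.toFinset : Set ℂ),
      (fun w => (z0, w)) '' ((pSlice p z0).roots.toFinset : Set ℂ)) :=
    Set.Finite.biUnion r.roots.toFinset.finite_toSet
      (fun z0 _ => ((pSlice p z0).roots.toFinset.finite_toSet).image _)
  apply hfin.subset
  rintro ⟨z0, w0⟩ ⟨⟨h1, hz, hw⟩, hder⟩
  have hev := congrArg (Polynomial.eval₂ (Polynomial.evalRingHom z0) w0) hABr
  rw [Polynomial.eval₂_add, Polynomial.eval₂_mul, Polynomial.eval₂_mul, Polynomial.eval₂_C,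
    S5Aux.ΦA_eval, S5Aux.ΦA_eval] at hev
  have hpz : eval ![z0, w0] p = 0 := h1
  have hdz : eval ![z0, w0] (pderiv (1 : Fin 2) p) = 0 := hder
  rw [hpz, hdz, mul_zero, mul_zero, add_zero] at hev
  have hroot : r.eval z0 = 0 := by simpa using hev.symm
  have hz0mem : z0 ∈ (↑r.roots.toFinset : Set ℂ) :=
    Multiset.mem_toFinset.mpr ((Polynomial.mem_roots hr0).mpr hroot)
  have hw0root : (pSlice p z0).eval w0 = 0 := by
    rw [S5Aux.pSlice_eval]
    exact hpz
  have hw0mem : (z0, w0) ∈ (fun w => (z0, w)) '' (↑(pSlice p z0).roots.toFinset : Set ℂ) :=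
    ⟨w0, Multiset.mem_toFinset.mpr ((Polynomial.mem_roots (hslice z0 hz)).mpr hw0root), rfl⟩
  exact Set.mem_biUnion hz0mem hw0mem
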